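/- arXiv:1812.05505 — 3 statements merged into one kernel-verified Lean document; each statement's English description precedes it below -/
import Mathlib

section
/- Let 𝕃 be a field of characteristic zero, let W ∈ 𝕃[t_0, t_1, …, t_n] be a squarefree (reduced) polynomial, and let D be a positive integer. If W(0, t_1, …, t_n) is not the zero polynomial, then the polynomial W(T_0^D, t_1, …, t_n), obtained by substituting T_0^D for t_0, is squarefree in 𝕃[T_0, t_1, …, t_n]. -/
open Polynomial

private lemma sq_dvd_of_dvd_of_dvd_derivative {R : Type*} [CommRing R] [IsDomain R] [CharZero R]
    {q f : R[X]} (hq : Prime q) (hqd : 0 < q.natDegree) (h1 : q ∣ f)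
    (h2 : q ∣ derivative f) : q * q ∣ f := by
  obtain ⟨g, rfl⟩ := h1
  rw [derivative_mul] at h2
  have hqg : q ∣ derivative q * g := by
    have hq2 : q ∣ q * derivative g := dvd_mul_right _ _
    exact (dvd_add_right hq2).mp (by rwa [add_comm] at h2)
  rcases hq.dvd_mul.mp hqg with h | h
  · exfalso
    have hd0 : derivative q ≠ 0 := by
      intro h0
      have := natDegree_eq_zero_of_derivative_eq_zero h0
      omega
    have hle := Polynomial.natDegree_le_of_dvd h hd0
    have hlt := Polynomial.natDegree_derivative_lt hqd.ne'
    omega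
  · exact mul_dvd_mul_left q h

private lemma primitive_dvd_of_map_dvd {R : Type*} [CommRing R] [IsDomain R]
    [NormalizedGCDMonoid R] (K : Type*) [Field K] [Algebra R K] [IsFractionRing R K]
    {p g : R[X]} (hp : p.IsPrimitive) (hg : g ≠ 0)
    (h : p.map (algebraMap R K) ∣ g.map (algebraMap R K)) : p ∣ g := by
  have hcont : g.content ≠ 0 := by rwa [Ne, Polynomial.content_eq_zero_iff]
  have hcu : IsUnit (Polynomial.C (algebraMap R K g.content)) :=
    Polynomial.isUnit_C.mpr (Ne.isUnit (fun hz => hcont (IsFractionRing.to_map_eq_zero_iff.mp hz)))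
  have hgeq : g.map (algebraMap R K)
      = Polynomial.C (algebraMap R K g.content) * (g.primPart).map (algebraMap R K) := by
    conv_lhs => rw [g.eq_C_content_mul_primPart]
    rw [Polynomial.map_mul, Polynomial.map_C]
  have h2 : p.map (algebraMap R K) ∣ (g.primPart).map (algebraMap R K) := by
    obtain ⟨u, hu⟩ := hcu
    have hpeq : (g.primPart).map (algebraMap R K) = ↑u⁻¹ * g.map (algebraMap R K) := by
      rw [hgeq, ← hu, ← mul_assoc, Units.inv_mul, one_mul]
    rw [hpeq]
    exact Dvd.dvd.mul_left h _
  exact ((hp.dvd_of_fraction_map_dvd_fraction_map (K := K) h2)).trans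
    g.primPart_dvd

private lemma coprime_derivative_of_squarefree {R : Type*} [CommRing R] [IsDomain R] [CharZero R]
    [NormalizedGCDMonoid R] [UniqueFactorizationMonoid R]
    (K : Type*) [Field K] [Algebra R K] [IsFractionRing R K]
    {f : R[X]} (hf : Squarefree f) (hf0 : f ≠ 0) :
    IsCoprime (f.map (algebraMap R K)) ((derivative f).map (algebraMap R K)) := by
  classical
  have hinj : Function.Injective (algebraMap R K) := IsFractionRing.injective R K
  have hfK0 : f.map (algebraMap R K) ≠ 0 := by
    rwa [Ne, Polynomial.map_eq_zero_iff hinj]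
  by_cases hder : derivative f = 0
  · rw [hder, Polynomial.map_zero, isCoprime_zero_right]
    have hdeg : f.natDegree = 0 := natDegree_eq_zero_of_derivative_eq_zero hder
    rw [Polynomial.eq_C_of_natDegree_eq_zero hdeg, Polynomial.map_C]
    refine Polynomial.isUnit_C.mpr (Ne.isUnit (fun hz => ?_))
    apply hf0
    rw [Polynomial.eq_C_of_natDegree_eq_zero hdeg,
      IsFractionRing.to_map_eq_zero_iff.mp hz, map_zero]
  by_contra hcop
  rw [← EuclideanDomain.gcd_isUnit_iff] at hcop
  have hg0 : EuclideanDomain.gcd (f.map (algebraMap R K)) ((derivative f).map (algebraMap R K))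
      ≠ 0 := by
    rw [Ne, EuclideanDomain.gcd_eq_zero_iff]
    rintro ⟨h1, -⟩
    exact hfK0 h1
  obtain ⟨q, hqi, hqd⟩ := WfDvdMonoid.exists_irreducible_factor hcop hg0
  have hq1 : q ∣ f.map (algebraMap R K) := hqd.trans (EuclideanDomain.gcd_dvd_left _ _)
  have hq2 : q ∣ (derivative f).map (algebraMap R K) :=
    hqd.trans (EuclideanDomain.gcd_dvd_right _ _)
  obtain ⟨c, hc⟩ := IsLocalization.integerNormalization_map_to_map (nonZeroDivisors R) q
  set a := IsLocalization.integerNormalization (nonZeroDivisors R) q with ha_def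
  have hc0 : algebraMap R K (c : R) ≠ 0 :=
    fun hz => nonZeroDivisors.coe_ne_zero c (IsFractionRing.to_map_eq_zero_iff.mp hz)
  have hcu : IsUnit (Polynomial.C (algebraMap R K (c : R))) :=
    Polynomial.isUnit_C.mpr hc0.isUnit
  have hmapa : a.map (algebraMap R K) = Polynomial.C (algebraMap R K (c : R)) * q := by
    rw [hc, Algebra.smul_def]
    rfl
  have ha0 : a ≠ 0 := by
    intro h
    apply hqi.ne_zero
    rw [h, Polynomial.map_zero] at hmapa
    exact (mul_eq_zero.mp hmapa.symm).resolve_left hcu.ne_zero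
  set qt := a.primPart with hqt
  have hqtprim : qt.IsPrimitive := a.isPrimitive_primPart
  have hconta : a.content ≠ 0 := by rwa [Ne, Polynomial.content_eq_zero_iff]
  have hcontu : IsUnit (Polynomial.C (algebraMap R K a.content)) :=
    Polynomial.isUnit_C.mpr (Ne.isUnit
      (fun hz => hconta (IsFractionRing.to_map_eq_zero_iff.mp hz)))
  have hmapqt : a.map (algebraMap R K)
      = Polynomial.C (algebraMap R K a.content) * qt.map (algebraMap R K) := by
    conv_lhs => rw [a.eq_C_content_mul_primPart]
    rw [Polynomial.map_mul, Polynomial.map_C]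
  have hassoc : Associated q (qt.map (algebraMap R K)) := by
    have h1 : Associated q (a.map (algebraMap R K)) := by
      obtain ⟨u, hu⟩ := hcu
      exact ⟨u, by rw [mul_comm, hu, ← hmapa]⟩
    have h2 : Associated (qt.map (algebraMap R K)) (a.map (algebraMap R K)) := by
      obtain ⟨u, hu⟩ := hcontu
      exact ⟨u, by rw [mul_comm, hu, ← hmapqt]⟩
    exact h1.trans h2.symm
  have hqtirr : Irreducible qt :=
    (hqtprim.irreducible_iff_irreducible_map_fraction_map (K := K)).mpr (hassoc.irreducible hqi)
  have hqtprime : Prime qt := UniqueFactorizationMonoid.irreducible_iff_prime.mp hqtirr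
  have hqdeg : 0 < q.natDegree := by
    rcases Nat.eq_zero_or_pos q.natDegree with h | h
    · exfalso
      apply hqi.not_isUnit
      rw [Polynomial.eq_C_of_natDegree_eq_zero h]
      refine Polynomial.isUnit_C.mpr (Ne.isUnit (fun hz => ?_))
      apply hqi.ne_zero
      rw [Polynomial.eq_C_of_natDegree_eq_zero h, hz, map_zero]
    · exact h
  have hqtdeg : 0 < qt.natDegree := by
    have e1 : qt.natDegree = (qt.map (algebraMap R K)).natDegree :=
      (Polynomial.natDegree_map_eq_of_injective hinj qt).symm
    have e2 : (qt.map (algebraMap R K)).natDegree = q.natDegree := by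
      obtain ⟨u, hu⟩ := hassoc
      calc (qt.map (algebraMap R K)).natDegree = (q * ↑u).natDegree := by rw [hu]
        _ = q.natDegree := by
            rw [Polynomial.natDegree_mul hqi.ne_zero u.ne_zero,
              Polynomial.natDegree_eq_zero_of_isUnit u.isUnit, add_zero]
    omega
  have hdvdf : qt ∣ f :=
    primitive_dvd_of_map_dvd K hqtprim hf0 (hassoc.symm.dvd.trans hq1)
  have hdvdf' : qt ∣ derivative f :=
    primitive_dvd_of_map_dvd K hqtprim hder (hassoc.symm.dvd.trans hq2)
  exact hqtprime.not_unit (hf qt (sq_dvd_of_dvd_of_dvd_derivative hqtprime hqtdeg hdvdf hdvdf'))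

private lemma squarefree_expand_aux {R : Type*} [CommRing R] [IsDomain R] [CharZero R]
    [UniqueFactorizationMonoid R] {f : R[X]} (hf : Squarefree f) {D : ℕ} (hD : 0 < D)
    (h0 : f.coeff 0 ≠ 0) : Squarefree (Polynomial.expand R D f) := by
  classical
  letI : StrongNormalizationMonoid R := UniqueFactorizationMonoid.strongNormalizationMonoid
  letI := UniqueFactorizationMonoid.toNormalizedGCDMonoid R
  have hf0 : f ≠ 0 := fun h => h0 (by simp [h])
  have hcoeffE : (Polynomial.expand R D f).coeff 0 = f.coeff 0 := by
    rw [Polynomial.coeff_expand hD]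
    simp
  have hE0 : Polynomial.expand R D f ≠ 0 := by
    intro h
    apply h0
    rw [← hcoeffE, h, Polynomial.coeff_zero]
  intro x hx
  by_contra hxu
  have hx0 : x ≠ 0 := by
    rintro rfl
    rw [mul_zero, zero_dvd_iff] at hx
    exact hE0 hx
  obtain ⟨p, hpi, hpx⟩ := WfDvdMonoid.exists_irreducible_factor hxu hx0
  have hp : Prime p := UniqueFactorizationMonoid.irreducible_iff_prime.mp hpi
  have hpE : p * p ∣ Polynomial.expand R D f := (mul_dvd_mul hpx hpx).trans hx
  by_cases hpd : p.natDegree = 0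
  · have hpC : p = Polynomial.C (p.coeff 0) := Polynomial.eq_C_of_natDegree_eq_zero hpd
    have hr2 : ∀ i, p.coeff 0 * p.coeff 0 ∣ (Polynomial.expand R D f).coeff i := by
      rw [← Polynomial.C_dvd_iff_dvd_coeff, Polynomial.C_mul, ← hpC]
      exact hpE
    have hrf : p * p ∣ f := by
      rw [hpC, ← Polynomial.C_mul, Polynomial.C_dvd_iff_dvd_coeff]
      intro i
      have := hr2 (i * D)
      rwa [Polynomial.coeff_expand_mul hD] at this
    exact hp.not_unit (hf p hrf)
  · have hpd' : 0 < p.natDegree := Nat.pos_of_ne_zero hpd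
    have h1 : p ∣ Polynomial.expand R D f := (dvd_mul_right p p).trans hpE
    have h2 : p ∣ derivative (Polynomial.expand R D f) := by
      obtain ⟨g, hg⟩ := hpE
      rw [hg, mul_assoc, derivative_mul]
      exact dvd_add ⟨derivative p * g, by ring⟩ (dvd_mul_right p _)
    rw [Polynomial.derivative_expand] at h2
    have h3 : p ∣ Polynomial.expand R D (derivative f) := by
      rcases hp.dvd_mul.mp h2 with h | h
      · exact h
      · exfalso
        rcases hp.dvd_mul.mp h with h | h
        · have hD0 : ((D : R[X])) ≠ 0 := Nat.cast_ne_zero.mpr hD.ne'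
          have hle := Polynomial.natDegree_le_of_dvd h hD0
          rw [Polynomial.natDegree_natCast] at hle
          omega
        · have hpX : p ∣ Polynomial.X := hp.dvd_of_dvd_pow h
          have hXE : (Polynomial.X : R[X]) ∣ Polynomial.expand R D f :=
            ((hp.associated_of_dvd Polynomial.prime_X hpX).symm.dvd).trans h1
          rw [Polynomial.X_dvd_iff, hcoeffE] at hXE
          exact h0 hXE
    set K := FractionRing R
    have hinj : Function.Injective (algebraMap R K) := IsFractionRing.injective R K
    have hcop := coprime_derivative_of_squarefree K hf hf0
    have hcopE : IsCoprime ((Polynomial.expand R D f).map (algebraMap R K))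
        ((Polynomial.expand R D (derivative f)).map (algebraMap R K)) := by
      have hm := hcop.map (Polynomial.expand K D).toRingHom
      rw [Polynomial.map_expand, Polynomial.map_expand]
      exact hm
    have d1 : p.map (algebraMap R K) ∣ (Polynomial.expand R D f).map (algebraMap R K) :=
      Polynomial.map_dvd _ h1
    have d3 : p.map (algebraMap R K) ∣ (Polynomial.expand R D (derivative f)).map
        (algebraMap R K) := Polynomial.map_dvd _ h3
    have hu : IsUnit (p.map (algebraMap R K)) := hcopE.isUnit_of_dvd' d1 d3
    have hnd := Polynomial.natDegree_eq_zero_of_isUnit hu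
    rw [Polynomial.natDegree_map_eq_of_injective hinj] at hnd
    omega

private lemma squarefree_mulEquiv {M N : Type*} [CommMonoidWithZero M] [CommMonoidWithZero N]
    (e : M ≃* N) {m : M} (hm : Squarefree m) : Squarefree (e m) := by
  intro x hx
  have hd : e.symm x * e.symm x ∣ m := by
    have := map_dvd e.symm hx
    rwa [map_mul, MulEquiv.symm_apply_apply] at this
  have := (hm _ hd).map e
  rwa [MulEquiv.apply_symm_apply] at this

/-- **Squarefreeness is preserved under the substitution `t_0 ↦ T_0^D`.**
If `W ∈ 𝕃[t_0, …, t_n]` is squarefree over a field of characteristic zero and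
`W(0, t_1, …, t_n) ≠ 0`, then `W(T_0^D, t_1, …, t_n)` is squarefree. -/
theorem squarefree_subst_pow
    {𝕃 : Type*} [Field 𝕃] [CharZero 𝕃] {n : ℕ}
    (W : MvPolynomial (Fin (n + 1)) 𝕃) (hW : Squarefree W)
    (D : ℕ) (hD : 0 < D)
    (h0 : MvPolynomial.aeval
        (fun i : Fin (n + 1) =>
          if i = 0 then (0 : MvPolynomial (Fin (n + 1)) 𝕃) else MvPolynomial.X i) W ≠ 0) :
    Squarefree
      (MvPolynomial.aeval
        (fun i : Fin (n + 1) =>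
          if i = 0 then (MvPolynomial.X 0 : MvPolynomial (Fin (n + 1)) 𝕃) ^ D
          else MvPolynomial.X i) W) := by
  classical
  set R := MvPolynomial (Fin n) 𝕃 with hR
  haveI : CharZero R := by
    refine charZero_of_injective_algebraMap (R := 𝕃) ?_
    rw [MvPolynomial.algebraMap_eq]
    exact MvPolynomial.C_injective _ _
  set e := MvPolynomial.finSuccEquiv 𝕃 n with he
  -- the substitution `t₀ ↦ T₀^D` corresponds to `expand` under `e`
  have key : e (MvPolynomial.aeval
      (fun i : Fin (n + 1) =>
        if i = 0 then (MvPolynomial.X 0 : MvPolynomial (Fin (n + 1)) 𝕃) ^ D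
        else MvPolynomial.X i) W) = Polynomial.expand R D (e W) := by
    have hcomp : (e.toAlgHom.comp (MvPolynomial.aeval
        (fun i : Fin (n + 1) =>
          if i = 0 then (MvPolynomial.X 0 : MvPolynomial (Fin (n + 1)) 𝕃) ^ D
          else MvPolynomial.X i)))
        = ((Polynomial.expand R D).restrictScalars 𝕃).comp e.toAlgHom := by
      refine MvPolynomial.algHom_ext fun i => ?_
      refine Fin.cases ?_ (fun j => ?_) i <;>
        simp [he, Fin.succ_ne_zero, MvPolynomial.finSuccEquiv_X_zero,
          MvPolynomial.finSuccEquiv_X_succ]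
    exact DFunLike.congr_fun hcomp W
  -- the hypothesis `h0` says the constant coefficient of `e W` is nonzero
  have key0 : e (MvPolynomial.aeval
      (fun i : Fin (n + 1) =>
        if i = 0 then (0 : MvPolynomial (Fin (n + 1)) 𝕃) else MvPolynomial.X i) W)
      = Polynomial.C (Polynomial.eval 0 (e W)) := by
    have hcomp : (e.toAlgHom.comp (MvPolynomial.aeval
        (fun i : Fin (n + 1) =>
          if i = 0 then (0 : MvPolynomial (Fin (n + 1)) 𝕃) else MvPolynomial.X i))).toRingHom
        = ((Polynomial.C (R := R)).comp (Polynomial.evalRingHom (0 : R))).comp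
            e.toAlgHom.toRingHom := by
      have hC : ∀ a : 𝕃, e (MvPolynomial.C a) = Polynomial.C (MvPolynomial.C a) := by
        intro a
        rw [he, MvPolynomial.finSuccEquiv_apply]
        simp
      refine MvPolynomial.ringHom_ext (fun a => ?_) (fun i => ?_)
      · simp [MvPolynomial.algebraMap_eq, hC]
      · refine Fin.cases ?_ (fun j => ?_) i <;>
          simp [he, Fin.succ_ne_zero, MvPolynomial.finSuccEquiv_X_zero,
            MvPolynomial.finSuccEquiv_X_succ]
    exact DFunLike.congr_fun hcomp W
  have h0' : (e W).coeff 0 ≠ 0 := by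
    rw [Polynomial.coeff_zero_eq_eval_zero]
    intro hz
    apply h0
    have : e (MvPolynomial.aeval
        (fun i : Fin (n + 1) =>
          if i = 0 then (0 : MvPolynomial (Fin (n + 1)) 𝕃) else MvPolynomial.X i) W) = 0 := by
      rw [key0, hz, Polynomial.C_0]
    exact e.injective (by rw [this, map_zero])
  have hWe : Squarefree (e W) := squarefree_mulEquiv e.toMulEquiv hW
  have hEsf : Squarefree (Polynomial.expand R D (e W)) :=
    squarefree_expand_aux hWe hD h0'
  have hfinal : (MvPolynomial.aeval
      (fun i : Fin (n + 1) =>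
        if i = 0 then (MvPolynomial.X 0 : MvPolynomial (Fin (n + 1)) 𝕃) ^ D
        else MvPolynomial.X i)) W = e.symm (Polynomial.expand R D (e W)) := by
    rw [← key, AlgEquiv.symm_apply_apply]
  rw [hfinal]
  exact squarefree_mulEquiv e.symm.toMulEquiv hEsf
end

section
/- Let K be an algebraically closed field of characteristic zero and let f_1, …, f_s ∈ K[x_1, …, x_n] be polynomials such that 1 belongs to the ideal generated by f_1, …, f_s. Consider the map Φ : K^{n+1} → K^{s+n} defined by Φ(x_1, …, x_n, z) = (z·f_1(x), …, z·f_s(x), x_1, …, x_n). Then Φ is injective and its image is Zariski closed in K^{s+n}, i.e., Im(Φ) equals the zero locus of its vanishing ideal: Im(Φ) = Z(I(Im(Φ))). -/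
/-- The map `Φ : K^{n+1} → K^{s+n}`, `Φ(x, z) = (z·f_1(x), …, z·f_s(x), x)`, where a point
of `K^{n+1}` is written as `(x, z)` with `x` its first `n` coordinates and `z` its last
coordinate. -/
noncomputable def Phi {n s : ℕ} {K : Type*} [CommSemiring K] (f : Fin s → MvPolynomial (Fin n) K) :
    (Fin (n + 1) → K) → (Fin (s + n) → K) :=
  fun w =>
    Fin.append
      (fun i : Fin s =>
        w (Fin.last n) * MvPolynomial.eval (fun j : Fin n => w (Fin.castSucc j)) (f i))
      (fun j : Fin n => w (Fin.castSucc j))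

/-- **Injectivity and closedness of the graph-type map `Φ`.**
If `1 ∈ (f_1, …, f_s)`, then `Φ(x, z) = (z·f_1(x), …, z·f_s(x), x)` is injective and its
image is Zariski closed, i.e. it equals the zero locus of its vanishing ideal. -/
theorem phi_injective_closed_image
    {K : Type*} [Field K] [IsAlgClosed K] [CharZero K] {n s : ℕ}
    (f : Fin s → MvPolynomial (Fin n) K)
    (h1 : (1 : MvPolynomial (Fin n) K) ∈ Ideal.span (Set.range f)) :
    Function.Injective (Phi f) ∧
      MvPolynomial.zeroLocus K (MvPolynomial.vanishingIdeal K (Set.range (Phi f))) =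
        Set.range (Phi f) := by
  obtain ⟨g, hg⟩ := (Ideal.mem_span_range_iff_exists_fun).mp h1
  -- evaluating the identity ∑ g i * f i = 1 at any point x
  have key : ∀ x : Fin n → K,
      ∑ i, MvPolynomial.eval x (g i) * MvPolynomial.eval x (f i) = 1 := by
    intro x
    have := congrArg (MvPolynomial.eval x) hg
    simpa using this
  constructor
  · -- injectivity
    intro w w' hww'
    have hx : ∀ j : Fin n, w (Fin.castSucc j) = w' (Fin.castSucc j) := by
      intro j
      have := congrFun hww' (Fin.natAdd s j)
      simpa [Phi, Fin.append_right] using this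
    have hz : w (Fin.last n) = w' (Fin.last n) := by
      have hcoord : ∀ i : Fin s,
          w (Fin.last n) * MvPolynomial.eval (fun j => w (Fin.castSucc j)) (f i)
            = w' (Fin.last n) * MvPolynomial.eval (fun j => w' (Fin.castSucc j)) (f i) := by
        intro i
        have := congrFun hww' (Fin.castAdd n i)
        simpa [Phi, Fin.append_left] using this
      set x := fun j => w (Fin.castSucc j) with hxdef
      have hx' : (fun j => w' (Fin.castSucc j)) = x := by
        funext j; exact (hx j).symm
      calc w (Fin.last n) = w (Fin.last n) *
              ∑ i, MvPolynomial.eval x (g i) * MvPolynomial.eval x (f i) := by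
            rw [key x, mul_one]
        _ = ∑ i, MvPolynomial.eval x (g i) *
              (w (Fin.last n) * MvPolynomial.eval x (f i)) := by
            rw [Finset.mul_sum]; apply Finset.sum_congr rfl; intros; ring
        _ = ∑ i, MvPolynomial.eval x (g i) *
              (w' (Fin.last n) * MvPolynomial.eval x (f i)) := by
            apply Finset.sum_congr rfl; intro i _
            rw [show w (Fin.last n) * MvPolynomial.eval x (f i)
                = w' (Fin.last n) * MvPolynomial.eval x (f i) by
              simpa [hx'] using hcoord i]
        _ = w' (Fin.last n) *
              ∑ i, MvPolynomial.eval x (g i) * MvPolynomial.eval x (f i) := by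
            rw [Finset.mul_sum]; apply Finset.sum_congr rfl; intros; ring
        _ = w' (Fin.last n) := by rw [key x, mul_one]
    funext k
    rcases Fin.eq_castSucc_or_eq_last k with ⟨j, rfl⟩ | rfl
    · exact hx j
    · exact hz
  · -- image is closed
    -- the defining polynomials
    set ρ : MvPolynomial (Fin n) K →+* MvPolynomial (Fin (s + n)) K :=
      (MvPolynomial.rename (Fin.natAdd s : Fin n → Fin (s + n))).toRingHom with hρ
    set P : Fin s → MvPolynomial (Fin (s + n)) K := fun i =>
      MvPolynomial.X (Fin.castAdd n i) -
        (∑ k, ρ (g k) * MvPolynomial.X (Fin.castAdd n k)) * ρ (f i) with hP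
    have evalρ : ∀ (y : Fin (s + n) → K) (p : MvPolynomial (Fin n) K),
        MvPolynomial.eval y (ρ p) = MvPolynomial.eval (fun j => y (Fin.natAdd s j)) p := by
      intro y p
      simp [hρ, MvPolynomial.eval_rename, Function.comp_def]
    have hrange : Set.range (Phi f) = MvPolynomial.zeroLocus K (Ideal.span (Set.range P)) := by
      rw [MvPolynomial.zeroLocus_span]
      ext y
      constructor
      · rintro ⟨w, rfl⟩ p ⟨i, rfl⟩
        simp only [MvPolynomial.aeval_eq_eval, hP, map_sub, map_mul, map_sum, evalρ, MvPolynomial.eval_X]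
        have hxw : ∀ j, Phi f w (Fin.natAdd s j) = w (Fin.castSucc j) := by
          intro j; simp [Phi, Fin.append_right]
        have hcw : ∀ i : Fin s, Phi f w (Fin.castAdd n i)
            = w (Fin.last n) * MvPolynomial.eval (fun j => w (Fin.castSucc j)) (f i) := by
          intro i; simp [Phi, Fin.append_left]
        simp only [hxw, hcw]
        set x := fun j => w (Fin.castSucc j)
        have : (∑ k, MvPolynomial.eval x (g k) *
              (w (Fin.last n) * MvPolynomial.eval x (f k))) = w (Fin.last n) := by
          calc (∑ k, MvPolynomial.eval x (g k) *
                (w (Fin.last n) * MvPolynomial.eval x (f k)))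
              = w (Fin.last n) *
                ∑ k, MvPolynomial.eval x (g k) * MvPolynomial.eval x (f k) := by
                rw [Finset.mul_sum]; apply Finset.sum_congr rfl; intros; ring
            _ = w (Fin.last n) := by rw [key x, mul_one]
        rw [this]
        ring
      · intro hy
        -- y satisfies all P i = 0; construct preimage
        set x : Fin n → K := fun j => y (Fin.natAdd s j) with hxdef
        set z : K := ∑ k, MvPolynomial.eval x (g k) * y (Fin.castAdd n k) with hzdef
        have hyi : ∀ i : Fin s, y (Fin.castAdd n i) = z * MvPolynomial.eval x (f i) := by
          intro i
          have := hy (P i) ⟨i, rfl⟩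
          simp only [MvPolynomial.aeval_eq_eval, hP, map_sub, map_mul, map_sum, evalρ, MvPolynomial.eval_X] at this
          rw [sub_eq_zero] at this
          simpa [hzdef, hxdef] using this
        refine ⟨(Fin.snoc x z : Fin (n+1) → K), ?_⟩
        funext k
        have hsnocx : ∀ j : Fin n, (Fin.snoc x z : Fin (n+1) → K) (Fin.castSucc j) = x j := by
          intro j; simp
        have hsnocz : (Fin.snoc x z : Fin (n+1) → K) (Fin.last n) = z := by simp
        induction k using Fin.addCases with
        | left i =>
          simp only [Phi, Fin.append_left, hsnocz]
          rw [hyi i]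
          have : (fun j : Fin n => (Fin.snoc x z : Fin (n+1) → K) (Fin.castSucc j)) = x := by
            funext j; exact hsnocx j
          rw [this]
        | right j =>
          simp only [Phi, Fin.append_right, hsnocx]; rfl
    rw [hrange]
    apply le_antisymm
    · exact MvPolynomial.zeroLocus_anti_mono
        (MvPolynomial.le_vanishingIdeal_zeroLocus _)
    · exact MvPolynomial.zeroLocus_vanishingIdeal_le _
end

section
/- Let K be a field of characteristic zero, let I be an ideal of K[x_1, …, x_n], let G ∈ √I, and let φ ∈ K[T] be a univariate polynomial of the form φ(T) = T^m · ψ(T) with ψ ∈ K[T] satisfying ψ(0) ≠ 0. If φ(G) ∈ I, then G^m ∈ I. -/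
/-- **Stripping the unit factors of `φ`.**
If `G ∈ √I` and `φ(T) = T^m · ψ(T)` with `ψ(0) ≠ 0`, then `φ(G) ∈ I` implies `G^m ∈ I`. -/
theorem pow_mem_of_comp_mem
    {K : Type*} [Field K] [CharZero K] {n : ℕ}
    (I : Ideal (MvPolynomial (Fin n) K))
    (G : MvPolynomial (Fin n) K) (hG : G ∈ I.radical)
    (m : ℕ) (φ ψ : Polynomial K)
    (hφ : φ = Polynomial.X ^ m * ψ) (hψ : ψ.eval 0 ≠ 0)
    (hφG : Polynomial.aeval G φ ∈ I) :
    G ^ m ∈ I := by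
  set f := Ideal.Quotient.mkₐ K I with hf
  -- image of G is nilpotent in the quotient
  obtain ⟨k, hk⟩ := hG
  have hnil : IsNilpotent (f G) :=
    ⟨k, by rw [← map_pow]; exact (Ideal.Quotient.eq_zero_iff_mem).2 hk⟩
  -- ψ(G) is a unit in the quotient
  have hdecomp : (Polynomial.aeval (f G)) ψ
      = algebraMap K _ (ψ.coeff 0) + Polynomial.aeval (f G) ψ.divX * f G := by
    conv_lhs => rw [← ψ.divX_mul_X_add]
    simp only [map_add, map_mul, Polynomial.aeval_X, Polynomial.aeval_C]
    ring
  have hunit : IsUnit ((Polynomial.aeval (f G)) ψ) := by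
    rw [hdecomp]
    refine IsNilpotent.isUnit_add_left_of_commute
      (Commute.isNilpotent_mul_left (Commute.all _ _) hnil) ?_ (Commute.all _ _)
    have : ψ.coeff 0 ≠ 0 := by rwa [Polynomial.coeff_zero_eq_eval_zero]
    exact (isUnit_iff_ne_zero.2 this).map (algebraMap K _)
  -- φ(G) = 0 in the quotient
  have h0 : (f G) ^ m * (Polynomial.aeval (f G)) ψ = 0 := by
    have : f (Polynomial.aeval G φ) = 0 := (Ideal.Quotient.eq_zero_iff_mem).2 hφG
    rw [hφ] at this
    rw [Polynomial.aeval_algHom_apply, ← this]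
    simp
  have : (f G) ^ m = 0 := hunit.mul_left_eq_zero.mp h0
  rw [← map_pow] at this
  exact (Ideal.Quotient.eq_zero_iff_mem).1 this
end
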